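/- Let Q be a function from datasets to ℝ with |Q(D) − Q(D')| ≤ Δ for all adjacent datasets D, D', and let ε > 0. Define the Laplace mechanism M(D) to be the probability measure on ℝ with density x ↦ (ε/(2Δ))·exp(−ε·|x − Q(D)|/Δ) with respect to Lebesgue measure. Then each M(D) is a probability measure, and M satisfies ε-differential privacy: for all adjacent D, D' and every measurable S ⊆ ℝ, M(D)(S) ≤ e^ε · M(D')(S). -/

import Mathlib

open MeasureTheory

open Real Set in
private lemma lap_integrable' {c : ℝ} (hc : 0 < c) :
    Integrable (fun x : ℝ => Real.exp (-(c * |x|))) := by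
  have hIoi : IntegrableOn (fun x : ℝ => Real.exp (-(c * |x|))) (Ioi 0) :=
    (exp_neg_integrableOn_Ioi 0 hc).congr_fun
      (fun x hx => by rw [abs_of_pos hx]; ring_nf) measurableSet_Ioi
  have hIic : IntegrableOn (fun x : ℝ => Real.exp (-(c * |x|))) (Iic 0) := by
    rw [← Measure.map_neg_eq_self (volume : Measure ℝ)]
    have m : MeasurableEmbedding fun x : ℝ => -x :=
      (Homeomorph.neg ℝ).measurableEmbedding
    rw [m.integrableOn_map_iff]
    simp only [Function.comp_def, abs_neg, neg_preimage, neg_Iic, neg_zero]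
    exact Iff.mpr integrableOn_Ici_iff_integrableOn_Ioi hIoi
  rw [← integrableOn_univ, ← Set.Iic_union_Ioi (a := (0:ℝ))]
  exact hIic.union hIoi

open Real Set in
private lemma lap_integral' {c : ℝ} (hc : 0 < c) :
    ∫ x : ℝ, Real.exp (-(c * |x|)) = 2 / c := by
  rw [integral_comp_abs (f := fun x : ℝ => Real.exp (-(c * x))),
    integral_comp_mul_left_Ioi (fun x => Real.exp (-x)) 0 hc]
  simp [integral_exp_neg_Ioi, smul_eq_mul, integral_exp_Iic_zero]
  ring

theorem laplace_mechanism_dp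
    {Data : Type*} (adj : Data → Data → Prop)
    (Q : Data → ℝ) (Δ : ℝ) (hΔ : 0 < Δ)
    (hsens : ∀ D D', adj D D' → |Q D - Q D'| ≤ Δ)
    (ε : ℝ) (hε : 0 < ε)
    (M : Data → Measure ℝ)
    (hM : ∀ D, M D = volume.withDensity
      (fun x => ENNReal.ofReal (ε / (2 * Δ) * Real.exp (-(ε * |x - Q D|) / Δ)))) :
    (∀ D, IsProbabilityMeasure (M D)) ∧
    (∀ D D', adj D D' → ∀ S : Set ℝ, MeasurableSet S →
      M D S ≤ ENNReal.ofReal (Real.exp ε) * M D' S) := by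
  set c : ℝ := ε / Δ with hc_def
  have hc : 0 < c := div_pos hε hΔ
  have hfun : ∀ μ x : ℝ, ε / (2 * Δ) * Real.exp (-(ε * |x - μ|) / Δ)
      = c / 2 * Real.exp (-(c * |x - μ|)) := by
    intro μ x
    rw [show -(ε * |x - μ|) / Δ = -(c * |x - μ|) by rw [hc_def]; ring,
      show ε / (2 * Δ) = c / 2 by rw [hc_def]; ring]
  constructor
  · intro D
    constructor
    rw [hM D, withDensity_apply _ MeasurableSet.univ, Measure.restrict_univ]
    simp only [hfun]
    have hint : Integrable (fun x : ℝ => c / 2 * Real.exp (-(c * |x - Q D|))) :=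
      ((lap_integrable' hc).comp_sub_right (Q D)).const_mul _
    have hnn : 0 ≤ᵐ[volume] fun x : ℝ => c / 2 * Real.exp (-(c * |x - Q D|)) :=
      Filter.Eventually.of_forall fun x => by positivity
    rw [← ofReal_integral_eq_lintegral_ofReal hint hnn, MeasureTheory.integral_const_mul,
      integral_sub_right_eq_self (fun x : ℝ => Real.exp (-(c * |x|))) (Q D),
      lap_integral' hc]
    rw [show c / 2 * (2 / c) = 1 by field_simp]
    exact ENNReal.ofReal_one
  · intro D D' hadj S hS
    rw [hM D, hM D', withDensity_apply _ hS, withDensity_apply _ hS,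
      ← lintegral_const_mul' _ _ ENNReal.ofReal_ne_top]
    refine lintegral_mono fun x => ?_
    rw [← ENNReal.ofReal_mul (Real.exp_pos ε).le]
    apply ENNReal.ofReal_le_ofReal
    have hd : |x - Q D'| - |x - Q D| ≤ Δ := by
      calc |x - Q D'| - |x - Q D| ≤ |(x - Q D') - (x - Q D)| := abs_sub_abs_le_abs_sub _ _
        _ = |Q D - Q D'| := by rw [show (x - Q D') - (x - Q D) = Q D - Q D' by ring]
        _ ≤ Δ := hsens D D' hadj
    have h2 : ε * (|x - Q D'| - |x - Q D|) / Δ ≤ ε := by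
      rw [div_le_iff₀ hΔ]
      nlinarith
    have h3 : -(ε * |x - Q D|) / Δ - -(ε * |x - Q D'|) / Δ
        = ε * (|x - Q D'| - |x - Q D|) / Δ := by ring
    have hexp : -(ε * |x - Q D|) / Δ ≤ ε + -(ε * |x - Q D'|) / Δ := by linarith
    have hk : (0:ℝ) ≤ ε / (2 * Δ) := by positivity
    calc ε / (2 * Δ) * Real.exp (-(ε * |x - Q D|) / Δ)
        ≤ ε / (2 * Δ) * (Real.exp ε * Real.exp (-(ε * |x - Q D'|) / Δ)) := by
          apply mul_le_mul_of_nonneg_left _ hk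
          rw [← Real.exp_add]
          exact Real.exp_le_exp.mpr hexp
      _ = Real.exp ε * (ε / (2 * Δ) * Real.exp (-(ε * |x - Q D'|) / Δ)) := by ring
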